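/- arXiv:1702.01169 — 2 statements merged into one kernel-verified Lean document; each statement's English description precedes it below -/
import Mathlib

section
/- Let a, b, σ² > 0 with b ≥ K·σ² for some K ≥ 1, and set t = K·σ²/b ∈ (0,1]. Then log₂(1 + a/(b + σ²)) − log₂(1 + t·a/(t·b + σ²)) ≤ log₂(1 + 1/K) ≤ log₂ e · (1/K). In particular, summing over K users, the total rate loss of the private messages satisfies Σ_{k=1}^K (R_k^NoRS − R_k^p) ≤ K·log₂(1 + 1/K) ≤ log₂ e. -/
/-- With `t = K σ²/b ∈ (0,1]` (requiring `b ≥ K σ²`, `K ≥ 1`),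
the per-user rate loss is at most `log₂(1 + 1/K) ≤ (log₂ e)/K`; summing over
`K` users gives a total private-rate loss of at most `log₂ e`. -/
theorem rate_splitting_rate_loss_bound
    (a b σ2 K : ℝ) (ha : 0 < a) (hb : 0 < b) (hσ : 0 < σ2)
    (hK : 1 ≤ K) (hbK : K * σ2 ≤ b)
    (t : ℝ) (ht : t = K * σ2 / b) :
    (t ∈ Set.Ioc (0 : ℝ) 1) ∧
    (Real.logb 2 (1 + a / (b + σ2)) - Real.logb 2 (1 + t * a / (t * b + σ2))
        ≤ Real.logb 2 (1 + 1 / K)) ∧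
    (Real.logb 2 (1 + 1 / K) ≤ Real.logb 2 (Real.exp 1) * (1 / K)) ∧
    (K * (Real.logb 2 (1 + a / (b + σ2)) - Real.logb 2 (1 + t * a / (t * b + σ2)))
        ≤ Real.logb 2 (Real.exp 1)) := by
  have hK0 : (0:ℝ) < K := lt_of_lt_of_le one_pos hK
  have ht0 : 0 < t := by
    rw [ht]; positivity
  have ht1 : t ≤ 1 := by
    rw [ht, div_le_one hb]; exact hbK
  have htb : t * b = K * σ2 := by
    rw [ht]; field_simp
  have hpriv0 : 0 < 1 + t * a / (t * b + σ2) := by positivity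
  have hno0 : 0 < 1 + a / (b + σ2) := by positivity
  have h1K0 : (0:ℝ) < 1 + 1 / K := by positivity
  -- Key: 1 + a/(b+σ²) ≤ (1+1/K)(1 + ta/(tb+σ²))
  have hkey : 1 + a / (b + σ2) ≤ (1 + 1 / K) * (1 + t * a / (t * b + σ2)) := by
    have h1 : t * a / (t * b + σ2) = K * a / ((K + 1) * b) := by
      rw [htb, ht]
      field_simp
    rw [h1]
    have h2 : (1 + 1 / K) * (1 + K * a / ((K + 1) * b)) = 1 + 1 / K + a / b := by
      field_simp
    rw [h2]
    have h3 : a / (b + σ2) ≤ a / b := by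
      apply div_le_div_of_nonneg_left ha.le hb
      linarith
    have h4 : (0:ℝ) ≤ 1 / K := by positivity
    linarith
  refine ⟨⟨ht0, ht1⟩, ?_, ?_, ?_⟩
  · have := Real.logb_le_logb_of_le (by norm_num : (1:ℝ) < 2) hno0 hkey
    rw [Real.logb_mul (ne_of_gt h1K0) (ne_of_gt hpriv0)] at this
    linarith
  · have hlog : Real.log (1 + 1 / K) ≤ 1 / K := by
      have := Real.log_le_sub_one_of_pos h1K0
      linarith
    have hlog2 : (0:ℝ) < Real.log 2 := Real.log_pos (by norm_num)
    rw [Real.logb, Real.logb, Real.log_exp]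
    rw [div_le_iff₀ hlog2] at *
    calc Real.log (1 + 1 / K) ≤ 1 / K := hlog
      _ = 1 / Real.log 2 * (1 / K) * Real.log 2 := by field_simp
  · have h2 : Real.logb 2 (1 + a / (b + σ2)) - Real.logb 2 (1 + t * a / (t * b + σ2))
        ≤ Real.logb 2 (1 + 1 / K) := by
      have := Real.logb_le_logb_of_le (by norm_num : (1:ℝ) < 2) hno0 hkey
      rw [Real.logb_mul (ne_of_gt h1K0) (ne_of_gt hpriv0)] at this
      linarith
    have h3 : Real.logb 2 (1 + 1 / K) ≤ Real.logb 2 (Real.exp 1) * (1 / K) := by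
      have hlog : Real.log (1 + 1 / K) ≤ 1 / K := by
        have := Real.log_le_sub_one_of_pos h1K0
        linarith
      have hlog2 : (0:ℝ) < Real.log 2 := Real.log_pos (by norm_num)
      rw [Real.logb, Real.logb, Real.log_exp]
      rw [div_le_iff₀ hlog2]
      calc Real.log (1 + 1 / K) ≤ 1 / K := hlog
        _ = 1 / Real.log 2 * (1 / K) * Real.log 2 := by field_simp
    calc K * (Real.logb 2 (1 + a / (b + σ2)) - Real.logb 2 (1 + t * a / (t * b + σ2)))
        ≤ K * (Real.logb 2 (Real.exp 1) * (1 / K)) := by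
          apply mul_le_mul_of_nonneg_left (le_trans h2 h3) hK0.le
      _ = Real.logb 2 (Real.exp 1) := by field_simp
end

section
/- Fix positive reals a (signal coefficient), b (interference coefficient), and σ² (noise). For the rate-splitting sum-rate R(t) = log₂(1 + (1−t)c/(t·d + σ²)) + Σ_{k=1}^K log₂(1 + t·a/(t·b + σ²)) with c, d > 0, if t is chosen so that t·b ≥ K σ² then R(1) − R(t) ≤ log₂ e − log₂(1 + (1−t)c/(t·d + σ²)); equivalently ΔR := R(t) − R(1) ≥ R^c(t) − log₂ e where R^c(t) is the common-message rate. -/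
/-- With `R(t) = R^c(t) + K R^p(t)` where
`R^c(t) = log₂(1+(1−t)c/(td+σ²))` and `R^p(t) = log₂(1+ta/(tb+σ²))`, if
`t ∈ (0,1]` satisfies `t·b ≥ K σ²` then the rate-splitting gain satisfies
`R(t) − R(1) ≥ R^c(t) − log₂ e`. -/
theorem rate_splitting_gain_bound
    (a b c d σ2 : ℝ) (ha : 0 < a) (hb : 0 < b) (hc : 0 < c) (hd : 0 < d)
    (hσ : 0 < σ2) (K : ℕ) (hK : 1 ≤ K)
    (t : ℝ) (ht : t ∈ Set.Ioc (0 : ℝ) 1) (htb : (K : ℝ) * σ2 ≤ t * b)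
    (Rc Rp R : ℝ → ℝ)
    (hRc : ∀ s, Rc s = Real.logb 2 (1 + (1 - s) * c / (s * d + σ2)))
    (hRp : ∀ s, Rp s = Real.logb 2 (1 + s * a / (s * b + σ2)))
    (hR : ∀ s, R s = Rc s + (K : ℝ) * Rp s) :
    R 1 - R t ≤ Real.logb 2 (Real.exp 1) - Rc t := by
  obtain ⟨ht0, ht1⟩ := ht
  have hKpos : (0:ℝ) < (K:ℝ) := by exact_mod_cast Nat.lt_of_lt_of_le Nat.zero_lt_one hK
  have hD1 : (0:ℝ) < b + σ2 := by linarith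
  have hDt : (0:ℝ) < t * b + σ2 := by nlinarith
  set A : ℝ := 1 + a / (b + σ2) with hAdef
  set B : ℝ := 1 + t * a / (t * b + σ2) with hBdef
  have hApos : (0:ℝ) < A := by
    have : 0 < a / (b + σ2) := div_pos ha hD1
    simp only [hAdef]; linarith
  have hBpos : (0:ℝ) < B := by
    have : 0 < t * a / (t * b + σ2) := div_pos (by nlinarith) hDt
    simp only [hBdef]; linarith
  -- key: K * (log A - log B) ≤ 1
  have hkey : (K:ℝ) * (Real.log A - Real.log B) ≤ 1 := by
    have hlog : Real.log A - Real.log B = Real.log (A / B) :=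
      (Real.log_div hApos.ne' hBpos.ne').symm
    have hle : Real.log (A / B) ≤ A / B - 1 :=
      Real.log_le_sub_one_of_pos (div_pos hApos hBpos)
    have hfrac : (K:ℝ) * (A / B - 1) ≤ 1 := by
      rw [div_sub_one hBpos.ne']
      have hAB : A - B = a * σ2 * (1 - t) / ((b + σ2) * (t * b + σ2)) := by
        simp only [hAdef, hBdef]
        field_simp
        ring
      have hden : (0:ℝ) < (b + σ2) * (t * b + σ2) := mul_pos hD1 hDt
      have hKAB : (K:ℝ) * (A - B) ≤ B := by
        have e1 : (K:ℝ) * (A - B) = ((K:ℝ)*σ2) * (a*(1-t)) / ((b+σ2)*(t*b+σ2)) := by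
          rw [hAB]; ring
        have hnn : (0:ℝ) ≤ a*(1-t) := by nlinarith
        have e2 : ((K:ℝ)*σ2) * (a*(1-t)) ≤ (t*b) * (a*(1-t)) :=
          mul_le_mul_of_nonneg_right htb hnn
        have e3 : (t*b) * (a*(1-t)) ≤ (b+σ2) * (t*a) := by
          nlinarith [mul_pos (mul_pos ht0 ha) hDt]
        have e4 : ((K:ℝ)*σ2) * (a*(1-t)) / ((b+σ2)*(t*b+σ2))
            ≤ (b+σ2) * (t*a) / ((b+σ2)*(t*b+σ2)) := by
          exact div_le_div_of_nonneg_right (e2.trans e3) hden.le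
        have e5 : (b+σ2) * (t*a) / ((b+σ2)*(t*b+σ2)) = t*a/(t*b+σ2) :=
          mul_div_mul_left _ _ hD1.ne'
        have e6 : t*a/(t*b+σ2) ≤ B := by
          have : (0:ℝ) ≤ 1 := zero_le_one
          simp only [hBdef]
          linarith
        calc (K:ℝ) * (A - B) = ((K:ℝ)*σ2) * (a*(1-t)) / ((b+σ2)*(t*b+σ2)) := e1
          _ ≤ (b+σ2) * (t*a) / ((b+σ2)*(t*b+σ2)) := e4
          _ = t*a/(t*b+σ2) := e5
          _ ≤ B := e6
      calc (K:ℝ) * ((A - B) / B) = (K:ℝ) * (A - B) / B := (mul_div_assoc _ _ _).symm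
        _ ≤ 1 := by rw [div_le_one hBpos]; exact hKAB
    calc (K:ℝ) * (Real.log A - Real.log B) = (K:ℝ) * Real.log (A / B) := by rw [hlog]
      _ ≤ (K:ℝ) * (A / B - 1) := by
          apply mul_le_mul_of_nonneg_left hle hKpos.le
      _ ≤ 1 := hfrac
  -- Rc 1 = 0, Rp at 1 and t
  have hRc1 : Rc 1 = 0 := by
    rw [hRc]; norm_num
  have hRp1 : Rp 1 = Real.logb 2 A := by rw [hRp]; simp [hAdef]
  have hRpt : Rp t = Real.logb 2 B := by rw [hRp, hBdef]
  rw [hR, hR, hRc1, hRp1, hRpt]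
  have hlog2 : (0:ℝ) < Real.log 2 := Real.log_pos (by norm_num)
  have hloge : Real.logb 2 (Real.exp 1) = 1 / Real.log 2 := by
    rw [Real.logb, Real.log_exp]
  rw [hloge]
  have hexp : (K:ℝ) * (Real.logb 2 A - Real.logb 2 B) ≤ 1 / Real.log 2 := by
    rw [Real.logb, Real.logb, div_sub_div_same, ← mul_div_assoc, div_le_div_iff₀ hlog2 hlog2]
    nlinarith
  linarith
end
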